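/- arXiv:2207.14657 — 2 statements merged into one kernel-verified Lean document; each statement's English description precedes it below -/
import Mathlib

section
/- Let C : V → Finset I be an assignment of collision sets to vertices of a finite graph, where I is a finite set of n agents. If each update to the assignment either (a) strictly enlarges C(v) for some vertex v by adding at least one new agent, with the first enlargement at any vertex adding at least two agents, or (b) is one of at most U·n per-vertex bounded 'bypass' modifications, then the total number of updates is at most [(n·U) + (n−1)]·|V|. -/
/-- Counting bound from Lemma 3 / Lemma 7: collision-set assignments
`C : V → Finset I` on a finite vertex set, starting all empty, undergo a
sequence of `T` updates.  Each update is either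
(a) a strict enlargement of `C v` at a single vertex `v` (all other vertices
unchanged), where the first enlargement at a vertex adds at least two agents, or
(b) a bypass modification attributed to a vertex, with at most `n * U` bypass
modifications per vertex (the assignment being unchanged).
Then the total number of updates satisfies
`T ≤ (n * U + (n - 1)) * |V|`, where `n = |I|`. -/
theorem collision_set_update_bound {V I : Type*} [Fintype V] [DecidableEq V] [Fintype I]
    (U T : ℕ) (Cs : Fin (T + 1) → V → Finset I) [DecidableEq I]
    (bypassVertex : Fin T → Option V)
    (h0 : ∀ v, Cs 0 v = ∅)
    (hstep : ∀ t : Fin T,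
      (∃ v, Cs t.castSucc v ⊂ Cs t.succ v ∧
            (Cs t.castSucc v = ∅ → 2 ≤ (Cs t.succ v).card) ∧
            (∀ w, w ≠ v → Cs t.succ w = Cs t.castSucc w)) ∨
      ((∃ v, bypassVertex t = some v) ∧ Cs t.succ = Cs t.castSucc))
    (hbypass : ∀ v : V,
      (Finset.univ.filter (fun t : Fin T => bypassVertex t = some v)).card
        ≤ Fintype.card I * U) :
    T ≤ (Fintype.card I * U + (Fintype.card I - 1)) * Fintype.card V := by
  classical
  set n := Fintype.card I with hn
  -- potential function
  set Φ : (V → Finset I) → ℕ := fun C => ∑ v : V, ((C v).card - 1) with hΦ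
  set P : Fin T → Prop := fun t => (∃ v, bypassVertex t = some v) ∧ Cs t.succ = Cs t.castSucc
    with hP
  -- key monotonicity with indicator
  have key : ∀ k : ℕ, (hk : k ≤ T) →
      (Finset.univ.filter (fun t : Fin T => ¬ P t ∧ (t : ℕ) < k)).card ≤ Φ (Cs ⟨k, by omega⟩) := by
    intro k hk
    induction k with
    | zero =>
      simp
    | succ k ih =>
      have hk' : k ≤ T := by omega
      have hsplit :
          (Finset.univ.filter (fun t : Fin T => ¬ P t ∧ (t : ℕ) < k + 1)).card ≤
          (Finset.univ.filter (fun t : Fin T => ¬ P t ∧ (t : ℕ) < k)).card +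
            (if ¬ P ⟨k, by omega⟩ then 1 else 0) := by
        have : (Finset.univ.filter (fun t : Fin T => ¬ P t ∧ (t : ℕ) < k + 1)) ⊆
            (Finset.univ.filter (fun t : Fin T => ¬ P t ∧ (t : ℕ) < k)) ∪
              (if ¬ P ⟨k, by omega⟩ then {⟨k, by omega⟩} else ∅) := by
          intro t ht
          simp only [Finset.mem_filter, Finset.mem_univ, true_and] at ht
          rcases ht with ⟨hnp, hlt⟩
          rcases Nat.lt_succ_iff_lt_or_eq.mp hlt with h | h
          · exact Finset.mem_union_left _ (by simp [hnp, h])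
          · apply Finset.mem_union_right
            have ht' : t = ⟨k, by omega⟩ := Fin.ext h
            rw [ht'] at hnp
            simp [ht', hnp]
          
        calc _ ≤ _ := Finset.card_le_card this
        _ ≤ _ := by
              refine le_trans (Finset.card_union_le _ _) ?_
              gcongr
              split <;> simp
      refine le_trans hsplit ?_
      -- step bound
      set t : Fin T := ⟨k, by omega⟩ with ht
      have hcast : (t.castSucc : Fin (T+1)) = ⟨k, by omega⟩ := rfl
      have hsucc : (t.succ : Fin (T+1)) = ⟨k + 1, by omega⟩ := rfl
      have hstep' : Φ (Cs t.castSucc) + (if ¬ P t then 1 else 0) ≤ Φ (Cs t.succ) := by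
        rcases hstep t with ⟨v, hsub, hfirst, hrest⟩ | hb
        · have hone : (if ¬ P t then 1 else 0) ≤ 1 := by split <;> simp
          refine le_trans (add_le_add_right hone _) ?_
          have hv : ((Cs t.castSucc v).card - 1) + 1 ≤ (Cs t.succ v).card - 1 := by
            rcases eq_or_ne (Cs t.castSucc v) ∅ with he | he
            · have := hfirst he
              simp [he]
              omega
            · have h1 : 1 ≤ (Cs t.castSucc v).card := Finset.card_pos.mpr (Finset.nonempty_iff_ne_empty.mpr he)
              have h2 : (Cs t.castSucc v).card < (Cs t.succ v).card := Finset.card_lt_card hsub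
              omega
          have hsum_eq : ∑ x ∈ Finset.univ.erase v, ((Cs t.castSucc x).card - 1) =
              ∑ x ∈ Finset.univ.erase v, ((Cs t.succ x).card - 1) :=
            Finset.sum_congr rfl (fun w hw => by rw [hrest w (Finset.mem_erase.mp hw).1])
          simp only [hΦ]
          rw [← Finset.sum_erase_add Finset.univ (fun w => ((Cs t.castSucc w).card - 1))
                (Finset.mem_univ v),
              ← Finset.sum_erase_add Finset.univ (fun w => ((Cs t.succ w).card - 1))
                (Finset.mem_univ v), hsum_eq, add_assoc]
          exact Nat.add_le_add_left hv _
        · have hPt : P t := ⟨hb.1, hb.2⟩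
          rw [if_neg (not_not_intro hPt), hb.2, add_zero]
      have := ih hk'
      calc (Finset.univ.filter (fun t : Fin T => ¬ P t ∧ (t : ℕ) < k)).card +
            (if ¬ P t then 1 else 0)
          ≤ Φ (Cs t.castSucc) + (if ¬ P t then 1 else 0) := by gcongr; exact this
        _ ≤ Φ (Cs t.succ) := hstep'
        _ = Φ (Cs ⟨k + 1, by omega⟩) := rfl
  -- final potential bound
  have hΦbound : Φ (Cs ⟨T, by omega⟩) ≤ (n - 1) * Fintype.card V := by
    simp only [hΦ]
    calc ∑ v : V, ((Cs ⟨T, by omega⟩ v).card - 1) ≤ ∑ _v : V, (n - 1) := by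
          gcongr with v
          have := Finset.card_le_univ (Cs ⟨T, by omega⟩ v)
          omega
      _ = (n - 1) * Fintype.card V := by simp [mul_comm]
  have hA : (Finset.univ.filter (fun t : Fin T => ¬ P t)).card ≤ (n - 1) * Fintype.card V := by
    have := key T le_rfl
    refine le_trans (le_of_eq ?_) (le_trans this hΦbound)
    congr 1
    apply Finset.filter_congr
    intro t _
    simp [t.isLt]
  have hB : (Finset.univ.filter (fun t : Fin T => P t)).card ≤ n * U * Fintype.card V := by
    have hsub : (Finset.univ.filter (fun t : Fin T => P t)) ⊆
        Finset.univ.biUnion (fun v : V => Finset.univ.filter (fun t : Fin T => bypassVertex t = some v)) := by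
      intro t ht
      simp only [Finset.mem_filter, Finset.mem_univ, true_and] at ht
      rcases ht.1 with ⟨v, hv⟩
      simp only [Finset.mem_biUnion, Finset.mem_filter, Finset.mem_univ, true_and]
      exact ⟨v, hv⟩
    calc _ ≤ _ := Finset.card_le_card hsub
      _ ≤ ∑ v : V, (Finset.univ.filter (fun t : Fin T => bypassVertex t = some v)).card :=
          Finset.card_biUnion_le
      _ ≤ ∑ _v : V, n * U := by gcongr with v; exact hbypass v
      _ = n * U * Fintype.card V := by simp [mul_comm]
  have htotal : T = (Finset.univ.filter (fun t : Fin T => P t)).card +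
      (Finset.univ.filter (fun t : Fin T => ¬ P t)).card := by
    rw [Finset.card_filter_add_card_filter_not]
    simp
  rw [htotal, add_mul]
  omega
end

section
/- Suppose for every vertex v on a constructed joint path π'' from v_I to v_F, with collision set C(v) and successor chosen along π'_{C(v)}(v, v_F), the inequality cost(π'_{C(v)}(v, succ(v))) + cost(π'_{C(succ(v))}(succ(v), v_F)) ≤ cost(π'_{C(v)}(v, v_F)) holds, and cost(π'_{C(v)}(v, v_F)) ≤ cost(π*(v, v_F)). Then by induction along the path, cost(π''(v_I, v_F)) ≤ cost(π*(v_I, v_F)). -/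
theorem path_cost_aux {V : Type*} : ∀ {L : ℕ} (v : Fin (L + 1) → V)
    (step : Fin L → ℝ) (A : V → ℝ),
    (∀ k : Fin L, step k + A (v k.succ) ≤ A (v k.castSucc)) →
    ∑ k, step k + A (v (Fin.last L)) ≤ A (v 0) := by
  intro L
  induction L with
  | zero => intro v step A h; simp [Fin.last]
  | succ n ih =>
      intro v step A h
      have h0 := h 0
      have hrest := ih (v ∘ Fin.succ) (step ∘ Fin.succ) A (fun k => by
        have := h k.succ
        simp only [Function.comp, Fin.succ_castSucc]; exact this)
      rw [Fin.sum_univ_succ]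
      have hlast : (v ∘ Fin.succ) (Fin.last n) = v (Fin.last (n + 1)) := by
        simp [Function.comp, Fin.succ_last]
      have h1 : (v ∘ Fin.succ) 0 = v (Fin.succ 0) := rfl
      rw [hlast, h1] at hrest
      have hc : v ((0 : Fin (n + 1)).castSucc) = v 0 := by norm_num
      rw [hc] at h0
      simp only [Function.comp] at hrest
      linarith

/-- Inequality (5) and the inductive step of Lemma 9.  The path `π''` from
`v_I` to `v_F` visits the vertices `v 0, v 1, …, v L`; `step k` is the cost of
its `k`-th step, i.e. `cost(π'_{C(v k)}(v k, v (k+1)))`; `A w` denotes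
`cost(π'_{C(w)}(w, v_F))`, and `Astar w` denotes `cost(π*(w, v_F))`.  If for
every step `step k + A (v (k+1)) ≤ A (v k)` (which follows from Lemma 8 since
`C(succ v) ⊆ C(v)`), `A w ≤ Astar w` for every vertex, and the combined path
from the final vertex `v L = v_F` to itself has cost `0`, then by induction
along the path `cost(π''(v_I, v_F)) = Σ_k step k ≤ Astar (v_I)`. -/
theorem path_cost_le_optimal_by_induction {V : Type*} {L : ℕ}
    (v : Fin (L + 1) → V) (step : Fin L → ℝ) (A Astar : V → ℝ)
    (hstep : ∀ k : Fin L, step k + A (v k.succ) ≤ A (v k.castSucc))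
    (hA : ∀ w, A w ≤ Astar w)
    (hend : A (v (Fin.last L)) = 0) :
    ∑ k, step k ≤ Astar (v 0) := by
  have := path_cost_aux v step A hstep
  rw [hend] at this
  calc ∑ k, step k = ∑ k, step k + 0 := by ring
    _ ≤ A (v 0) := this
    _ ≤ Astar (v 0) := hA _
end
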